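/- Let B ∈ ℝ^{n×d}, β > 0, α, τ ∈ ℝ with α + τ > 0. Define the block matrices Q₂ = [[βBᵀB, -αBᵀ], [-B, (1/β)I_n]] and M₂ = [[I_d, 0], [-τβB, (α+τ)I_n]]. Then M₂ is invertible and Q₂ M₂⁻¹ = [[(1 - ατ/(α+τ))βBᵀB, -(α/(α+τ))Bᵀ], [-(α/(α+τ))B, (1/((α+τ)β))I_n]], which is a symmetric matrix. -/

import Mathlib

open Matrix

theorem Q2_M2_inv {n d : ℕ} (B : Matrix (Fin n) (Fin d) ℝ) (β α τ : ℝ)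
    (hβ : 0 < β) (hατ : 0 < α + τ) :
    IsUnit (Matrix.fromBlocks (1 : Matrix (Fin d) (Fin d) ℝ) 0
        (-((τ * β) • B)) ((α + τ) • (1 : Matrix (Fin n) (Fin n) ℝ))) ∧
    Matrix.fromBlocks (β • (Bᵀ * B)) (-(α • Bᵀ)) (-B) ((1/β) • 1) *
        (Matrix.fromBlocks (1 : Matrix (Fin d) (Fin d) ℝ) 0
          (-((τ * β) • B)) ((α + τ) • (1 : Matrix (Fin n) (Fin n) ℝ)))⁻¹
      = Matrix.fromBlocks ((1 - α * τ / (α + τ)) • β • (Bᵀ * B)) (-((α / (α + τ)) • Bᵀ))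
          (-((α / (α + τ)) • B)) ((1 / ((α + τ) * β)) • 1) ∧
    (Matrix.fromBlocks ((1 - α * τ / (α + τ)) • β • (Bᵀ * B)) (-((α / (α + τ)) • Bᵀ))
        (-((α / (α + τ)) • B))
        ((1 / ((α + τ) * β)) • (1 : Matrix (Fin n) (Fin n) ℝ))).IsSymm := by
  have hατ' : (α + τ) ≠ 0 := ne_of_gt hατ
  have hβ' : β ≠ 0 := ne_of_gt hβ
  set M := Matrix.fromBlocks (1 : Matrix (Fin d) (Fin d) ℝ) 0
      (-((τ * β) • B)) ((α + τ) • (1 : Matrix (Fin n) (Fin n) ℝ)) with hM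
  set N := Matrix.fromBlocks (1 : Matrix (Fin d) (Fin d) ℝ) 0
      ((τ * β / (α + τ)) • B) ((1 / (α + τ)) • (1 : Matrix (Fin n) (Fin n) ℝ)) with hN
  have hMN : M * N = 1 := by
    rw [hM, hN, Matrix.fromBlocks_multiply, ← Matrix.fromBlocks_one,
      Matrix.fromBlocks_inj]
    refine ⟨by simp, by simp, ?_, ?_⟩ <;>
    · simp [Matrix.smul_mul, Matrix.mul_smul, smul_smul]
      match_scalars <;> field_simp <;> ring
  have hNM : N * M = 1 := by
    rw [hM, hN, Matrix.fromBlocks_multiply, ← Matrix.fromBlocks_one,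
      Matrix.fromBlocks_inj]
    refine ⟨by simp, by simp, ?_, ?_⟩ <;>
    · simp [Matrix.smul_mul, Matrix.mul_smul, smul_smul]
      match_scalars <;> field_simp <;> ring
  have hUnit : IsUnit M := ⟨⟨M, N, hMN, hNM⟩, rfl⟩
  have hinv : M⁻¹ = N := inv_eq_right_inv hMN
  refine ⟨hUnit, ?_, ?_⟩
  · rw [hinv, hN, Matrix.fromBlocks_multiply, Matrix.fromBlocks_inj]
    refine ⟨?_, ?_, ?_, ?_⟩ <;>
    · simp [Matrix.smul_mul, Matrix.mul_smul, smul_smul, Matrix.mul_assoc]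
      match_scalars <;> (field_simp; try ring)
  · unfold Matrix.IsSymm
    rw [Matrix.fromBlocks_transpose]
    simp [Matrix.transpose_smul, Matrix.transpose_mul]
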